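/- Strong duality holds for Inf_Q(P): there exist a primal feasible x* and a dual feasible y* such that x_0* = Σ_i (p_{i0}·y_{i0}* + ⟨p̄_i, ȳ_i*⟩), and moreover every primal feasible x and every dual feasible y satisfy x_0 ≤ Σ_i (p_{i0}·y_{i0} + ⟨p̄_i, ȳ_i⟩); consequently x* is optimal for Inf_Q(P) and y* is dual optimal, and the optimal values of the two problems coincide. -/

import Mathlib

/-- A point `x` is primal feasible for `Inf_Q(P)`. -/
def PrimalFeasible {d m : ℕ} (p : Fin m → ℝ × EuclideanSpace ℝ (Fin d))
    (x : ℝ × EuclideanSpace ℝ (Fin d)) : Prop :=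
  ∀ i, ‖(p i).2 - x.2‖ ≤ (p i).1 - x.1

/-- `y` is feasible for the dual problem (D). -/
def DualFeasible {d m : ℕ} (y : Fin m → ℝ × EuclideanSpace ℝ (Fin d)) : Prop :=
  (∑ i, (y i).1) = 1 ∧ (∑ i, (y i).2) = 0 ∧ ∀ i, ‖(y i).2‖ ≤ (y i).1

/-- The dual objective function of (D). -/
noncomputable def DualObj {d m : ℕ} (p y : Fin m → ℝ × EuclideanSpace ℝ (Fin d)) : ℝ :=
  ∑ i, ((p i).1 * (y i).1 + (inner ℝ (p i).2 (y i).2 : ℝ))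

lemma weak_duality {d m : ℕ} (p : Fin m → ℝ × EuclideanSpace ℝ (Fin d))
    (x : ℝ × EuclideanSpace ℝ (Fin d)) (hx : PrimalFeasible p x)
    (y : Fin m → ℝ × EuclideanSpace ℝ (Fin d)) (hy : DualFeasible y) :
    x.1 ≤ DualObj p y := by
  obtain ⟨hy1, hy2, hy3⟩ := hy
  have key : ∀ i, 0 ≤ (y i).1 * ((p i).1 - x.1) + (inner ℝ ((p i).2 - x.2) (y i).2 : ℝ) := by
    intro i
    have h1 : 0 ≤ (y i).1 := le_trans (norm_nonneg _) (hy3 i)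
    have h2 : (0:ℝ) ≤ (p i).1 - x.1 := le_trans (norm_nonneg _) (hx i)
    have h3 : -((p i).1 - x.1) * (y i).1 ≤ (inner ℝ ((p i).2 - x.2) (y i).2 : ℝ) := by
      have := abs_real_inner_le_norm ((p i).2 - x.2) ((y i).2)
      have h4 : -(‖(p i).2 - x.2‖ * ‖(y i).2‖) ≤ (inner ℝ ((p i).2 - x.2) (y i).2 : ℝ) :=
        neg_le_of_abs_le this
      refine le_trans ?_ h4
      rw [neg_mul, neg_le_neg_iff]
      exact mul_le_mul (hx i) (hy3 i) (norm_nonneg _) h2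
    nlinarith [h3]
  have hsum : 0 ≤ ∑ i, ((y i).1 * ((p i).1 - x.1) + (inner ℝ ((p i).2 - x.2) (y i).2 : ℝ)) :=
    Finset.sum_nonneg fun i _ => key i
  have expand : ∑ i, ((y i).1 * ((p i).1 - x.1) + (inner ℝ ((p i).2 - x.2) (y i).2 : ℝ))
      = DualObj p y - x.1 := by
    have hinner : ∀ i, (inner ℝ ((p i).2 - x.2) (y i).2 : ℝ)
        = (inner ℝ (p i).2 (y i).2 : ℝ) - (inner ℝ x.2 (y i).2 : ℝ) := fun i => inner_sub_left _ _ _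
    have hx2 : ∑ i, (inner ℝ x.2 (y i).2 : ℝ) = 0 := by
      rw [← inner_sum, hy2, inner_zero_right]
    calc ∑ i, ((y i).1 * ((p i).1 - x.1) + (inner ℝ ((p i).2 - x.2) (y i).2 : ℝ))
        = ∑ i, ((p i).1 * (y i).1 + (inner ℝ (p i).2 (y i).2 : ℝ))
          - x.1 * (∑ i, (y i).1) - ∑ i, (inner ℝ x.2 (y i).2 : ℝ) := by
          rw [Finset.mul_sum, ← Finset.sum_sub_distrib, ← Finset.sum_sub_distrib]
          refine Finset.sum_congr rfl fun i _ => ?_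
          rw [hinner i]; ring
      _ = DualObj p y - x.1 := by rw [hy1, hx2, DualObj]; ring
  linarith [expand ▸ hsum]

lemma exists_maximizer {d m : ℕ} (hm : 1 ≤ m) (p : Fin m → ℝ × EuclideanSpace ℝ (Fin d)) :
    ∃ zs : EuclideanSpace ℝ (Fin d), ∀ z,
      (Finset.univ.inf' (Finset.univ_nonempty_iff.2 ⟨⟨0, hm⟩⟩)
        fun i => (p i).1 - ‖(p i).2 - z‖) ≤
      (Finset.univ.inf' (Finset.univ_nonempty_iff.2 ⟨⟨0, hm⟩⟩)
        fun i => (p i).1 - ‖(p i).2 - zs‖) := by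
  have hne : (Finset.univ : Finset (Fin m)).Nonempty := Finset.univ_nonempty_iff.2 ⟨⟨0, hm⟩⟩
  set f : EuclideanSpace ℝ (Fin d) → ℝ :=
    fun z => Finset.univ.inf' hne fun i => (p i).1 - ‖(p i).2 - z‖ with hf
  have hcont : Continuous f := by
    rw [continuous_iff_continuousAt]
    intro x
    exact ContinuousAt.finset_inf'_apply hne fun i _ =>
      (continuous_const.sub ((continuous_const.sub continuous_id).norm)).continuousAt
  set i₀ : Fin m := ⟨0, hm⟩
  set R : ℝ := max (‖(p i₀).2‖ + ((p i₀).1 - f 0)) 0 with hR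
  have houtside : ∀ z : EuclideanSpace ℝ (Fin d), R ≤ ‖z‖ → f z ≤ f 0 := by
    intro z hz
    have h1 : f z ≤ (p i₀).1 - ‖(p i₀).2 - z‖ := Finset.inf'_le _ (Finset.mem_univ i₀)
    have h2 : ‖z‖ - ‖(p i₀).2‖ ≤ ‖(p i₀).2 - z‖ := by
      have := norm_sub_norm_le z ((p i₀).2)
      rw [norm_sub_rev] at this; linarith [this]
    have h3 : ‖(p i₀).2‖ + ((p i₀).1 - f 0) ≤ R := le_max_left _ _
    linarith
  have hball : (Metric.closedBall (0 : EuclideanSpace ℝ (Fin d)) R).Nonempty :=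
    ⟨0, Metric.mem_closedBall_self (le_max_right _ _)⟩
  obtain ⟨zs, hzs_mem, hzs⟩ := (isCompact_closedBall (0 : EuclideanSpace ℝ (Fin d)) R).exists_isMaxOn
    hball hcont.continuousOn
  refine ⟨zs, fun z => ?_⟩
  by_cases hzin : z ∈ Metric.closedBall (0 : EuclideanSpace ℝ (Fin d)) R
  · exact hzs hzin
  · have : R ≤ ‖z‖ := by
      simp only [Metric.mem_closedBall, dist_zero_right, not_le] at hzin
      exact hzin.le
    exact (houtside z this).trans (hzs (Metric.mem_closedBall_self (le_max_right _ _)))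

lemma exists_multipliers {d m : ℕ} (hm : 1 ≤ m) (g : Fin m → EuclideanSpace ℝ (Fin d) → ℝ)
    (hconv : ∀ i (a b : ℝ) (z1 z2 : EuclideanSpace ℝ (Fin d)), 0 ≤ a → 0 ≤ b → a + b = 1 →
      g i (a • z1 + b • z2) ≤ a * g i z1 + b * g i z2)
    (hpos : ∀ z, ∃ i, 0 ≤ g i z) :
    ∃ lam : Fin m → ℝ, (∀ i, 0 ≤ lam i) ∧ (∑ i, lam i) = 1 ∧
      ∀ z, 0 ≤ ∑ i, lam i * g i z := by
  classical
  set s : Set (Fin m → ℝ) := {u | ∀ i, u i < 0} with hs_def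
  set t : Set (Fin m → ℝ) := {u | ∃ z, ∀ i, g i z ≤ u i} with ht_def
  have hs_conv : Convex ℝ s := by
    intro u hu v hv a b ha hb hab
    intro i
    have hui := hu i; have hvi := hv i
    have hcomb : (a • u + b • v) i = a * u i + b * v i := rfl
    rw [Set.mem_setOf_eq] at *
    rw [hcomb]
    rcases lt_or_ge 0 a with hpa | hza
    · nlinarith
    · have ha0 : a = 0 := le_antisymm hza ha
      have hb1 : b = 1 := by linarith
      rw [ha0, hb1]
      simpa using hvi
  have hs_open : IsOpen s := by
    have : s = ⋂ i, (fun u : Fin m → ℝ => u i) ⁻¹' Set.Iio 0 := by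
      ext u; simp [hs_def, Set.mem_iInter]
    rw [this]
    exact isOpen_iInter_of_finite fun i => (continuous_apply i).isOpen_preimage _ isOpen_Iio
  have ht_conv : Convex ℝ t := by
    rintro u ⟨z1, hz1⟩ v ⟨z2, hz2⟩ a b ha hb hab
    refine ⟨a • z1 + b • z2, fun i => ?_⟩
    have hcomb : (a • u + b • v) i = a * u i + b * v i := rfl
    rw [hcomb]
    calc g i (a • z1 + b • z2) ≤ a * g i z1 + b * g i z2 := hconv i a b z1 z2 ha hb hab
      _ ≤ a * u i + b * v i := by
          have h1 : a * g i z1 ≤ a * u i := mul_le_mul_of_nonneg_left (hz1 i) ha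
          have h2 : b * g i z2 ≤ b * v i := mul_le_mul_of_nonneg_left (hz2 i) hb
          linarith
  have hdisj : Disjoint s t := by
    rw [Set.disjoint_left]
    rintro u hu ⟨z, hz⟩
    obtain ⟨i, hi⟩ := hpos z
    exact absurd ((hi.trans (hz i)).trans_lt (hu i)) (lt_irrefl 0)
  obtain ⟨f, c, hfs, hft⟩ := geometric_hahn_banach_open hs_conv hs_open ht_conv hdisj
  set lam' : Fin m → ℝ := fun i => f (Pi.single i 1) with hlam'
  have hrepr : ∀ u : Fin m → ℝ, f u = ∑ i, u i * lam' i := by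
    intro u
    have hdecomp : u = ∑ i, u i • (Pi.single i 1 : Fin m → ℝ) := by
      ext j
      rw [Finset.sum_apply]
      simp [Pi.single_apply]
    conv_lhs => rw [hdecomp]
    rw [map_sum]
    exact Finset.sum_congr rfl fun i _ => by rw [map_smul]; simp [smul_eq_mul, hlam']
  have hlam'_nonneg : ∀ i, 0 ≤ lam' i := by
    intro i
    by_contra h
    push_neg at h
    set A : ℝ := ∑ j ∈ Finset.univ.erase i, lam' j with hA
    set T : ℝ := max 1 ((c + A + 1) / (-lam' i)) with hT
    have hT1 : (1:ℝ) ≤ T := le_max_left _ _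
    set u : Fin m → ℝ := fun j => if j = i then -T else -1 with hu_def
    have hus : u ∈ s := by
      intro j
      by_cases hj : j = i
      · show (if j = i then -T else -1) < 0
        rw [if_pos hj]; linarith
      · show (if j = i then -T else -1) < 0
        rw [if_neg hj]; norm_num
    have hfu : f u = -T * lam' i - A := by
      rw [hrepr u, ← Finset.add_sum_erase _ (fun j => u j * lam' j) (Finset.mem_univ i)]
      have h1 : u i * lam' i = -T * lam' i := by simp [hu_def]
      have h2 : ∑ j ∈ Finset.univ.erase i, u j * lam' j
          = -∑ j ∈ Finset.univ.erase i, lam' j := by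
        rw [← Finset.sum_neg_distrib]
        refine Finset.sum_congr rfl fun j hj => ?_
        have hji : j ≠ i := Finset.ne_of_mem_erase hj
        simp [hu_def, hji]
      rw [h1, h2, ← hA]; ring
    have hlt := hfs u hus
    rw [hfu] at hlt
    have hTge : (c + A + 1) / (-lam' i) ≤ T := le_max_right _ _
    have hpos' : 0 < -lam' i := by linarith
    have hkey : c + A + 1 ≤ T * (-lam' i) := by
      rw [div_le_iff₀ hpos'] at hTge
      linarith
    nlinarith
  have hS : 0 < ∑ i, lam' i := by
    rcases (Finset.sum_nonneg fun i _ => hlam'_nonneg i).lt_or_eq with hlt | heq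
    · exact hlt
    · exfalso
      have hall : ∀ i, lam' i = 0 := fun i =>
        (Finset.sum_eq_zero_iff_of_nonneg fun j _ => hlam'_nonneg j).1 heq.symm i
          (Finset.mem_univ i)
      have hf0 : ∀ u : Fin m → ℝ, f u = 0 := by
        intro u; rw [hrepr]; simp [hall]
      have h1 : (0:ℝ) < c := by
        have := hfs (fun _ => -1) (fun i => by norm_num)
        rwa [hf0] at this
      have h2 : c ≤ 0 := by
        have := hft (fun i => g i 0) ⟨0, fun i => le_rfl⟩
        rwa [hf0] at this
      linarith
  have hc : 0 ≤ c := by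
    by_contra h
    push_neg at h
    set q : ℝ := ∑ i, lam' i with hq
    set τ : ℝ := -c / (2 * (|q| + 1)) with hτ
    have hτpos : 0 < τ := div_pos (by linarith) (by positivity)
    have hlt := hfs (fun _ => -τ) (fun i => by simpa using hτpos)
    have hval : f (fun _ => -τ) = -τ * q := by
      rw [hrepr, hq, Finset.mul_sum]
    rw [hval] at hlt
    have hq1 : q ≤ |q| := le_abs_self q
    have habs : (0:ℝ) ≤ |q| := abs_nonneg q
    have hτval : τ * (2 * (|q| + 1)) = -c := by
      rw [hτ]; field_simp
    nlinarith
  refine ⟨fun i => lam' i / (∑ j, lam' j), fun i => div_nonneg (hlam'_nonneg i) hS.le, ?_, ?_⟩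
  · rw [← Finset.sum_div, div_self hS.ne']
  · intro z
    have hge := hft (fun i => g i z) ⟨z, fun i => le_rfl⟩
    rw [hrepr] at hge
    have h0 : 0 ≤ ∑ i, g i z * lam' i := hc.trans hge
    have heq : ∑ i, lam' i / (∑ j, lam' j) * g i z = (∑ i, g i z * lam' i) / (∑ j, lam' j) := by
      rw [Finset.sum_div]
      exact Finset.sum_congr rfl fun i _ => by ring
    rw [heq]
    exact div_nonneg h0 hS.le

lemma norm_add_smul_le_aux {d : ℕ} (a w : EuclideanSpace ℝ (Fin d)) (t : ℝ)
    (ha : a ≠ 0) (ht : 0 ≤ t) :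
    ‖a + t • w‖ ≤ ‖a‖ + t * ((inner ℝ a w : ℝ) / ‖a‖) + t^2 * (‖w‖^2 / (2 * ‖a‖)) := by
  have hr : 0 < ‖a‖ := norm_pos_iff.2 ha
  have hsq : ‖a + t • w‖^2 = ‖a‖^2 + 2 * t * (inner ℝ a w : ℝ) + t^2 * ‖w‖^2 := by
    rw [norm_add_sq_real, real_inner_smul_right, norm_smul]
    simp [abs_of_nonneg ht]
    ring
  have key : ‖a + t • w‖ ≤ (‖a + t • w‖^2 + ‖a‖^2) / (2 * ‖a‖) := by
    rw [le_div_iff₀ (by linarith)]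
    nlinarith [sq_nonneg (‖a + t • w‖ - ‖a‖)]
  refine key.trans (le_of_eq ?_)
  rw [hsq]
  field_simp
  ring

lemma subgrad_bound {d m : ℕ} [DecidableEq (EuclideanSpace ℝ (Fin d))]
    (q : Fin m → EuclideanSpace ℝ (Fin d)) (lam : Fin m → ℝ)
    (hlam : ∀ i, 0 ≤ lam i) (zs : EuclideanSpace ℝ (Fin d))
    (hmin : ∀ z, (∑ i, lam i * ‖q i - zs‖) ≤ ∑ i, lam i * ‖q i - z‖) :
    ‖∑ i ∈ Finset.univ.filter (fun i => ¬ q i = zs), (lam i / ‖q i - zs‖) • (zs - q i)‖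
      ≤ ∑ i ∈ Finset.univ.filter (fun i => q i = zs), lam i := by
  set Z : Finset (Fin m) := Finset.univ.filter (fun i => q i = zs) with hZ
  set N : Finset (Fin m) := Finset.univ.filter (fun i => ¬ q i = zs) with hN
  set w : EuclideanSpace ℝ (Fin d) := ∑ i ∈ N, (lam i / ‖q i - zs‖) • (zs - q i) with hw
  set μ : ℝ := ∑ i ∈ Z, lam i with hμdef
  have hμ : 0 ≤ μ := Finset.sum_nonneg fun i _ => hlam i
  set C : ℝ := ∑ i ∈ N, lam i * (‖w‖^2 / (2 * ‖q i - zs‖)) with hC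
  have hCnn : 0 ≤ C := by
    refine Finset.sum_nonneg fun i hi => ?_
    have h2 := hlam i
    positivity
  have hsplit : ∀ z : EuclideanSpace ℝ (Fin d),
      (∑ i, lam i * ‖q i - z‖) = (∑ i ∈ Z, lam i * ‖q i - z‖) + ∑ i ∈ N, lam i * ‖q i - z‖ :=
    fun z => (Finset.sum_filter_add_sum_filter_not Finset.univ _ _).symm
  have hinner : (∑ i ∈ N, (lam i / ‖q i - zs‖) * (inner ℝ (q i - zs) w : ℝ)) = -‖w‖^2 := by
    have : (∑ i ∈ N, (lam i / ‖q i - zs‖) * (inner ℝ (q i - zs) w : ℝ))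
        = (inner ℝ (∑ i ∈ N, (lam i / ‖q i - zs‖) • (q i - zs)) w : ℝ) := by
      rw [sum_inner]
      exact Finset.sum_congr rfl fun i _ => (real_inner_smul_left _ _ _).symm
    rw [this]
    have hneg : (∑ i ∈ N, (lam i / ‖q i - zs‖) • (q i - zs)) = -w := by
      rw [hw, ← Finset.sum_neg_distrib]
      exact Finset.sum_congr rfl fun i _ => by rw [← smul_neg, neg_sub]
    rw [hneg, inner_neg_left, real_inner_self_eq_norm_sq]
  have key : ∀ t : ℝ, 0 < t → ‖w‖^2 ≤ μ * ‖w‖ + t * C := by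
    intro t ht
    have hmin' := hmin (zs - t • w)
    rw [hsplit (zs - t • w), hsplit zs] at hmin'
    have hZ0 : ∀ i ∈ Z, lam i * ‖q i - zs‖ = 0 := fun i hi => by
      have : q i = zs := (Finset.mem_filter.1 hi).2
      simp [this]
    rw [Finset.sum_eq_zero hZ0, zero_add] at hmin'
    have hZt : (∑ i ∈ Z, lam i * ‖q i - (zs - t • w)‖) = μ * (t * ‖w‖) := by
      rw [hμdef, Finset.sum_mul]
      refine Finset.sum_congr rfl fun i hi => ?_
      have hqi : q i = zs := (Finset.mem_filter.1 hi).2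
      rw [hqi]
      have : zs - (zs - t • w) = t • w := by abel
      rw [this, norm_smul]
      simp [abs_of_nonneg ht.le]
    have hNt : (∑ i ∈ N, lam i * ‖q i - (zs - t • w)‖)
        ≤ (∑ i ∈ N, lam i * ‖q i - zs‖) + t * (-‖w‖^2) + t^2 * C := by
      have hterm : ∀ i ∈ N, lam i * ‖q i - (zs - t • w)‖
          ≤ lam i * ‖q i - zs‖ + t * ((lam i / ‖q i - zs‖) * (inner ℝ (q i - zs) w : ℝ))
            + t^2 * (lam i * (‖w‖^2 / (2 * ‖q i - zs‖))) := by
        intro i hi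
        have hne : ¬ q i = zs := (Finset.mem_filter.1 hi).2
        have ha : q i - zs ≠ 0 := sub_ne_zero.2 hne
        have hrpos : 0 < ‖q i - zs‖ := norm_pos_iff.2 ha
        have heq : q i - (zs - t • w) = (q i - zs) + t • w := by abel
        rw [heq]
        have hb := norm_add_smul_le_aux (q i - zs) w t ha ht.le
        have := mul_le_mul_of_nonneg_left hb (hlam i)
        calc lam i * ‖(q i - zs) + t • w‖
            ≤ lam i * (‖q i - zs‖ + t * ((inner ℝ (q i - zs) w : ℝ) / ‖q i - zs‖)
              + t^2 * (‖w‖^2 / (2 * ‖q i - zs‖))) := this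
          _ = lam i * ‖q i - zs‖ + t * ((lam i / ‖q i - zs‖) * (inner ℝ (q i - zs) w : ℝ))
              + t^2 * (lam i * (‖w‖^2 / (2 * ‖q i - zs‖))) := by ring
      calc (∑ i ∈ N, lam i * ‖q i - (zs - t • w)‖)
          ≤ ∑ i ∈ N, (lam i * ‖q i - zs‖
              + t * ((lam i / ‖q i - zs‖) * (inner ℝ (q i - zs) w : ℝ))
              + t^2 * (lam i * (‖w‖^2 / (2 * ‖q i - zs‖)))) := Finset.sum_le_sum hterm
        _ = (∑ i ∈ N, lam i * ‖q i - zs‖)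
              + t * (∑ i ∈ N, (lam i / ‖q i - zs‖) * (inner ℝ (q i - zs) w : ℝ))
              + t^2 * C := by
            rw [hC, Finset.sum_add_distrib, Finset.sum_add_distrib, Finset.mul_sum,
              Finset.mul_sum]
        _ = (∑ i ∈ N, lam i * ‖q i - zs‖) + t * (-‖w‖^2) + t^2 * C := by rw [hinner]
    have hcomb : (∑ i ∈ N, lam i * ‖q i - zs‖)
        ≤ μ * (t * ‖w‖) + ((∑ i ∈ N, lam i * ‖q i - zs‖) + t * (-‖w‖^2) + t^2 * C) := by
      calc (∑ i ∈ N, lam i * ‖q i - zs‖)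
          ≤ (∑ i ∈ Z, lam i * ‖q i - (zs - t • w)‖) + ∑ i ∈ N, lam i * ‖q i - (zs - t • w)‖ :=
            hmin'
        _ ≤ μ * (t * ‖w‖) + ((∑ i ∈ N, lam i * ‖q i - zs‖) + t * (-‖w‖^2) + t^2 * C) := by
            rw [hZt]; linarith [hNt]
    have h1 : t * ‖w‖^2 ≤ t * (μ * ‖w‖ + t * C) := by nlinarith
    exact le_of_mul_le_mul_left h1 ht
  have hsq : ‖w‖^2 ≤ μ * ‖w‖ := by
    refine le_of_forall_pos_le_add fun ε hε => ?_
    rcases hCnn.lt_or_eq with hCpos | hC0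
    · have := key (ε / C) (div_pos hε hCpos)
      have : (ε / C) * C = ε := div_mul_cancel₀ ε hCpos.ne'
      linarith [key (ε / C) (div_pos hε hCpos), this]
    · have := key 1 one_pos
      rw [← hC0] at this
      linarith
  rcases (norm_nonneg w).lt_or_eq with hwpos | hw0
  · refine le_of_mul_le_mul_right ?_ hwpos
    calc ‖w‖ * ‖w‖ = ‖w‖^2 := by ring
      _ ≤ μ * ‖w‖ := hsq
  · calc ‖w‖ = 0 := hw0.symm
      _ ≤ μ := hμ

/-- Strong duality for `Inf_Q(P)`: there exist a primal feasible `x*` and a dual feasible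
`y*` with equal objective values, weak duality holds, and consequently `x*` is primal
optimal and `y*` is dual optimal. -/
theorem stmt_5 (d m : ℕ) (hd : 1 ≤ d) (hm : 1 ≤ m)
    (p : Fin m → ℝ × EuclideanSpace ℝ (Fin d)) :
    ∃ (xs : ℝ × EuclideanSpace ℝ (Fin d)) (ys : Fin m → ℝ × EuclideanSpace ℝ (Fin d)),
      PrimalFeasible p xs ∧ DualFeasible ys ∧ xs.1 = DualObj p ys ∧
      (∀ x, PrimalFeasible p x → ∀ y, DualFeasible y → x.1 ≤ DualObj p y) ∧
      (∀ x, PrimalFeasible p x → x.1 ≤ xs.1) ∧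
      (∀ y, DualFeasible y → DualObj p ys ≤ DualObj p y) := by

  haveI : DecidableEq (EuclideanSpace ℝ (Fin d)) := Classical.decEq _
  have hne : (Finset.univ : Finset (Fin m)).Nonempty := Finset.univ_nonempty_iff.2 ⟨⟨0, hm⟩⟩
  obtain ⟨zs, hzs⟩ := exists_maximizer hm p
  set q : Fin m → EuclideanSpace ℝ (Fin d) := fun i => (p i).2 with hq
  set v : ℝ := Finset.univ.inf' (Finset.univ_nonempty_iff.2 ⟨⟨0, hm⟩⟩)
    (fun i => (p i).1 - ‖(p i).2 - zs‖) with hv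
  have hviel : ∀ i, v ≤ (p i).1 - ‖(p i).2 - zs‖ :=
    fun i => Finset.inf'_le _ (Finset.mem_univ i)
  set g : Fin m → EuclideanSpace ℝ (Fin d) → ℝ :=
    fun i z => ‖(p i).2 - z‖ - ((p i).1 - v) with hg
  have hconv : ∀ i (a b : ℝ) (z1 z2 : EuclideanSpace ℝ (Fin d)), 0 ≤ a → 0 ≤ b → a + b = 1 →
      g i (a • z1 + b • z2) ≤ a * g i z1 + b * g i z2 := by
    intro i a b z1 z2 ha hb hab
    have hid : (p i).2 - (a • z1 + b • z2) = a • ((p i).2 - z1) + b • ((p i).2 - z2) := by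
      have ha' : a = 1 - b := by linarith
      rw [ha']
      module
    have hnorm : ‖(p i).2 - (a • z1 + b • z2)‖ ≤ a * ‖(p i).2 - z1‖ + b * ‖(p i).2 - z2‖ := by
      rw [hid]
      refine (norm_add_le _ _).trans ?_
      rw [norm_smul, norm_smul, Real.norm_eq_abs, Real.norm_eq_abs,
        abs_of_nonneg ha, abs_of_nonneg hb]
    show ‖(p i).2 - (a • z1 + b • z2)‖ - ((p i).1 - v)
      ≤ a * (‖(p i).2 - z1‖ - ((p i).1 - v)) + b * (‖(p i).2 - z2‖ - ((p i).1 - v))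
    have : a * (‖(p i).2 - z1‖ - ((p i).1 - v)) + b * (‖(p i).2 - z2‖ - ((p i).1 - v))
        = a * ‖(p i).2 - z1‖ + b * ‖(p i).2 - z2‖ - (a + b) * ((p i).1 - v) := by ring
    rw [this, hab]
    linarith
  have hpos : ∀ z, ∃ i, 0 ≤ g i z := by
    intro z
    obtain ⟨i, -, hieq⟩ := Finset.exists_mem_eq_inf' hne (fun i => (p i).1 - ‖(p i).2 - z‖)
    refine ⟨i, ?_⟩
    have h1 : (Finset.univ.inf' hne fun i => (p i).1 - ‖(p i).2 - z‖) ≤ v := hzs z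
    rw [hieq] at h1
    show 0 ≤ ‖(p i).2 - z‖ - ((p i).1 - v)
    linarith
  obtain ⟨lam, hlam0, hlam1, hlamz⟩ := exists_multipliers hm g hconv hpos
  -- complementary slackness
  have hcs : ∑ i, lam i * g i zs = 0 := by
    refine le_antisymm (Finset.sum_nonpos fun i _ => ?_) (hlamz zs)
    have h1 : g i zs ≤ 0 := by
      show ‖(p i).2 - zs‖ - ((p i).1 - v) ≤ 0
      linarith [hviel i]
    exact mul_nonpos_of_nonneg_of_nonpos (hlam0 i) h1
  have hcs' : ∑ i, lam i * ‖q i - zs‖ = ∑ i, lam i * ((p i).1 - v) := by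
    have : ∑ i, lam i * g i zs
        = ∑ i, lam i * ‖q i - zs‖ - ∑ i, lam i * ((p i).1 - v) := by
      rw [← Finset.sum_sub_distrib]
      exact Finset.sum_congr rfl fun i _ => by show lam i * (‖(p i).2 - zs‖ - _) = _; ring
    rw [this] at hcs
    linarith
  have hmin : ∀ z, (∑ i, lam i * ‖q i - zs‖) ≤ ∑ i, lam i * ‖q i - z‖ := by
    intro z
    rw [hcs']
    have := hlamz z
    have h2 : ∑ i, lam i * g i z
        = ∑ i, lam i * ‖q i - z‖ - ∑ i, lam i * ((p i).1 - v) := by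
      rw [← Finset.sum_sub_distrib]
      exact Finset.sum_congr rfl fun i _ => by show lam i * (‖(p i).2 - z‖ - _) = _; ring
    rw [h2] at this
    linarith
  have hwb := subgrad_bound q lam hlam0 zs hmin
  set Z : Finset (Fin m) := Finset.univ.filter (fun i => q i = zs) with hZ
  set N : Finset (Fin m) := Finset.univ.filter (fun i => ¬ q i = zs) with hN
  set w : EuclideanSpace ℝ (Fin d) := ∑ i ∈ N, (lam i / ‖q i - zs‖) • (zs - q i) with hw
  set μ : ℝ := ∑ i ∈ Z, lam i with hμ
  -- hwb : ‖w‖ ≤ μ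
  set ys : Fin m → ℝ × EuclideanSpace ℝ (Fin d) := fun i =>
    (lam i, if q i = zs then -((lam i / μ) • w) else (lam i / ‖q i - zs‖) • (zs - q i)) with hys
  have hμ0 : 0 ≤ μ := Finset.sum_nonneg fun i _ => hlam0 i
  have hμzero : μ = 0 → w = 0 := by
    intro h
    have : ‖w‖ ≤ 0 := h ▸ hwb
    exact norm_le_zero_iff.1 this
  have hlamZ : ∀ i ∈ Z, μ = 0 → lam i = 0 := by
    intro i hi h
    exact (Finset.sum_eq_zero_iff_of_nonneg fun j _ => hlam0 j).1 (hμ ▸ h) i hi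
  -- sum of second components is zero
  have hsum2 : (∑ i, (ys i).2) = 0 := by
    have hsplit : (∑ i, (ys i).2) = (∑ i ∈ Z, (ys i).2) + ∑ i ∈ N, (ys i).2 :=
      (Finset.sum_filter_add_sum_filter_not Finset.univ _ _).symm
    have hNval : (∑ i ∈ N, (ys i).2) = w := by
      rw [hw]
      refine Finset.sum_congr rfl fun i hi => ?_
      have : ¬ q i = zs := (Finset.mem_filter.1 hi).2
      simp [hys, this]
    have hZval : (∑ i ∈ Z, (ys i).2) = -w := by
      have : (∑ i ∈ Z, (ys i).2) = ∑ i ∈ Z, -((lam i / μ) • w) := by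
        refine Finset.sum_congr rfl fun i hi => ?_
        have : q i = zs := (Finset.mem_filter.1 hi).2
        simp [hys, this]
      rw [this]
      rcases eq_or_lt_of_le hμ0 with hz | hpos'
      · have hwz : w = 0 := hμzero hz.symm
        simp [hwz]
      · have hdiv : (∑ i ∈ Z, lam i / μ) = 1 := by
          rw [← Finset.sum_div, ← hμ, div_self hpos'.ne']
        calc ∑ i ∈ Z, -((lam i / μ) • w)
            = -∑ i ∈ Z, (lam i / μ) • w := Finset.sum_neg_distrib _
          _ = -w := by rw [← Finset.sum_smul, hdiv, one_smul]
    rw [hsplit, hNval, hZval]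
    abel
  -- norm bounds
  have hnorm2 : ∀ i, ‖(ys i).2‖ ≤ (ys i).1 := by
    intro i
    by_cases hqi : q i = zs
    · have hiZ : i ∈ Z := Finset.mem_filter.2 ⟨Finset.mem_univ i, hqi⟩
      show ‖(if q i = zs then -((lam i / μ) • w) else _)‖ ≤ lam i
      rw [if_pos hqi, norm_neg, norm_smul, Real.norm_eq_abs,
        abs_of_nonneg (div_nonneg (hlam0 i) hμ0)]
      rcases eq_or_lt_of_le hμ0 with hz | hpos'
      · have := hlamZ i hiZ hz.symm
        simp [this]
      · calc lam i / μ * ‖w‖ ≤ lam i / μ * μ :=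
            mul_le_mul_of_nonneg_left hwb (div_nonneg (hlam0 i) hμ0)
          _ = lam i := div_mul_cancel₀ _ hpos'.ne'
    · show ‖(if q i = zs then _ else (lam i / ‖q i - zs‖) • (zs - q i))‖ ≤ lam i
      rw [if_neg hqi, norm_smul, Real.norm_eq_abs]
      have hrpos : 0 < ‖q i - zs‖ := norm_pos_iff.2 (sub_ne_zero.2 hqi)
      rw [abs_of_nonneg (div_nonneg (hlam0 i) hrpos.le)]
      rw [norm_sub_rev zs (q i)]
      rw [div_mul_cancel₀ _ hrpos.ne']
  have hdualfeas : DualFeasible ys := ⟨hlam1, hsum2, hnorm2⟩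
  -- objective value
  have hobj : DualObj p ys = v := by
    have hkey : ∀ i, (inner ℝ (p i).2 (ys i).2 : ℝ)
        = (inner ℝ zs (ys i).2 : ℝ) - lam i * ‖q i - zs‖ := by
      intro i
      by_cases hqi : q i = zs
      · have hp2 : (p i).2 = zs := hqi
        rw [hp2, hqi]
        simp
      · have h1 : (ys i).2 = (lam i / ‖q i - zs‖) • (zs - q i) := by
          show (if q i = zs then _ else _) = _
          rw [if_neg hqi]
        have hrpos : 0 < ‖q i - zs‖ := norm_pos_iff.2 (sub_ne_zero.2 hqi)
        have h2 : (inner ℝ ((p i).2 - zs) (ys i).2 : ℝ) = - (lam i * ‖q i - zs‖) := by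
          rw [h1, real_inner_smul_right]
          have : (inner ℝ ((p i).2 - zs) (zs - q i) : ℝ) = -(‖q i - zs‖^2) := by
            have hqp : (p i).2 - zs = q i - zs := rfl
            rw [hqp]
            have : zs - q i = -(q i - zs) := by abel
            rw [this, inner_neg_right, real_inner_self_eq_norm_sq]
          rw [this]
          field_simp
        have h3 : (inner ℝ ((p i).2 - zs) (ys i).2 : ℝ)
            = (inner ℝ (p i).2 (ys i).2 : ℝ) - (inner ℝ zs (ys i).2 : ℝ) := inner_sub_left _ _ _
        linarith [h2, h3]
    rw [DualObj]
    have : ∑ i, ((p i).1 * (ys i).1 + (inner ℝ (p i).2 (ys i).2 : ℝ))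
        = ∑ i, ((p i).1 * lam i + ((inner ℝ zs (ys i).2 : ℝ) - lam i * ‖q i - zs‖)) := by
      exact Finset.sum_congr rfl fun i _ => by rw [hkey i]
    rw [this]
    have hzssum : ∑ i, (inner ℝ zs (ys i).2 : ℝ) = 0 := by
      rw [← inner_sum, hsum2, inner_zero_right]
    have hexpand : ∑ i, ((p i).1 * lam i + ((inner ℝ zs (ys i).2 : ℝ) - lam i * ‖q i - zs‖))
        = ∑ i, (p i).1 * lam i + ∑ i, (inner ℝ zs (ys i).2 : ℝ) - ∑ i, lam i * ‖q i - zs‖ := by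
      rw [Finset.sum_add_distrib, Finset.sum_sub_distrib]
      ring
    rw [hexpand, hzssum, hcs']
    have : ∑ i, lam i * ((p i).1 - v) = ∑ i, (p i).1 * lam i - v := by
      have h1 : ∑ i, lam i * ((p i).1 - v) = ∑ i, (p i).1 * lam i - (∑ i, lam i) * v := by
        rw [Finset.sum_mul, ← Finset.sum_sub_distrib]
        exact Finset.sum_congr rfl fun i _ => by ring
      rw [h1, hlam1, one_mul]
    rw [this]
    ring
  refine ⟨(v, zs), ys, ?_, hdualfeas, ?_, ?_, ?_, ?_⟩
  · intro i
    show ‖(p i).2 - zs‖ ≤ (p i).1 - v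
    linarith [hviel i]
  · exact hobj.symm
  · exact fun x hx y hy => weak_duality p x hx y hy
  · intro x hx
    have := weak_duality p x hx ys hdualfeas
    rw [hobj] at this
    exact this
  · intro y hy
    rw [hobj]
    exact weak_duality p (v, zs) (fun i => by show ‖(p i).2 - zs‖ ≤ (p i).1 - v; linarith [hviel i]) y hy
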